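/- For every k ≥ 1, all A, B ∈ M_{2^k}(ℂ) and every n ≥ 1, ‖B(n) − A(n)‖_2^2 = 2^{n−1} ‖B − A‖_2^2. -/

import Mathlib

open Matrix
open scoped Kronecker

noncomputable section

/-- Cast a square matrix along an equality of sizes. -/
def mcast {m n : ℕ} (h : m = n) (A : Matrix (Fin m) (Fin m) ℂ) :
    Matrix (Fin n) (Fin n) ℂ :=
  Matrix.reindex (finCongr h) (finCongr h) A

/-- `A ⊗ I₂` in the paper's convention, i.e. the block-diagonal matrix `diag(A, A)`
(used for the recursion `W_{n+1} = Wₙ ⊗ I₂ = diag(Wₙ, Wₙ)`). -/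
def blockDup {m : ℕ} (A : Matrix (Fin m) (Fin m) ℂ) :
    Matrix (Fin (2 * m)) (Fin (2 * m)) ℂ :=
  Matrix.reindex finProdFinEquiv finProdFinEquiv
    ((1 : Matrix (Fin 2) (Fin 2) ℂ) ⊗ₖ A)

/-- `I₂ ⊗ A` in the paper's convention: each entry `a_{ij}` is placed at the (1-based)
positions `(2i−1, 2j−1)` and `(2i, 2j)`.  This is the coherent embedding
`φ(A) = I₂ ⊗ A` of the paper, for which `e_{ij} ↦ e_{2i−1,2j−1} + e_{2i,2j}`. -/
def entryDup {m : ℕ} (A : Matrix (Fin m) (Fin m) ℂ) :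
    Matrix (Fin (m * 2)) (Fin (m * 2)) ℂ :=
  Matrix.reindex finProdFinEquiv finProdFinEquiv
    (A ⊗ₖ (1 : Matrix (Fin 2) (Fin 2) ℂ))

/-- The 4 × 4 matrix `W₁`. -/
def W1 : Matrix (Fin 4) (Fin 4) ℂ :=
  !![1, 0, 0, 0;
     0, (Real.sqrt 2 : ℂ)⁻¹, -(Real.sqrt 2 : ℂ)⁻¹, 0;
     0, (Real.sqrt 2 : ℂ)⁻¹, (Real.sqrt 2 : ℂ)⁻¹, 0;
     0, 0, 0, 1]

/-- The sequence `Wₙ ∈ M_{2^{n+1}}(ℂ)`, with `W_{n+1} = Wₙ ⊗ I₂ = diag(Wₙ, Wₙ)`.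
(The value at `0` is irrelevant; all statements only involve `n ≥ 1`.) -/
def Wmat : (n : ℕ) → Matrix (Fin (2 ^ (n + 1))) (Fin (2 ^ (n + 1))) ℂ
  | 0 => 1
  | 1 => mcast (by norm_num) W1
  | (n + 2) => mcast (by ring) (blockDup (Wmat (n + 1)))

/-- `iterA k A n` is the matrix `A(n+1) ∈ M_{2^{k+n}}(ℂ)` of the paper:
`A(1) = A`, `A(n+1) = W_{k+n-1} (I₂ ⊗ A(n)) W_{k+n-1}^*`. -/
def iterA (k : ℕ) (A : Matrix (Fin (2 ^ k)) (Fin (2 ^ k)) ℂ) :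
    (n : ℕ) → Matrix (Fin (2 ^ (k + n))) (Fin (2 ^ (k + n))) ℂ
  | 0 => A
  | (n + 1) => Wmat (k + n) * mcast (by ring) (entryDup (iterA k A n)) * (Wmat (k + n))ᴴ

/-- Squared Frobenius (Hilbert–Schmidt) norm. -/
def frobSq {m n : ℕ} (A : Matrix (Fin m) (Fin n) ℂ) : ℝ :=
  ∑ i, ∑ j, ‖A i j‖ ^ 2

/-- `diffA k A n = A(n+2) - I₂ ⊗ A(n+1)` in the paper's numbering. -/
def diffA (k : ℕ) (A : Matrix (Fin (2 ^ k)) (Fin (2 ^ k)) ℂ) (n : ℕ) :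
    Matrix (Fin (2 ^ (k + n + 1))) (Fin (2 ^ (k + n + 1))) ℂ :=
  iterA k A (n + 1) - mcast (by ring) (entryDup (iterA k A n))

/-- The diagonal compression `E_{D(m)}`. -/
def diagComp {m : ℕ} (A : Matrix (Fin m) (Fin m) ℂ) : Matrix (Fin m) (Fin m) ℂ :=
  Matrix.diagonal (fun i => A i i)

-- ### auxiliary lemmas

lemma mcast_sub {m n : ℕ} (h : m = n) (A B : Matrix (Fin m) (Fin m) ℂ) :
    mcast h (A - B) = mcast h A - mcast h B := by
  ext i j; simp [mcast]

lemma entryDup_sub {m : ℕ} (A B : Matrix (Fin m) (Fin m) ℂ) :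
    entryDup (A - B) = entryDup A - entryDup B := by
  ext i j
  simp [entryDup, Matrix.kroneckerMap_apply, sub_mul]

lemma iterA_sub (k : ℕ) (A B : Matrix (Fin (2 ^ k)) (Fin (2 ^ k)) ℂ) (n : ℕ) :
    iterA k B n - iterA k A n = iterA k (B - A) n := by
  induction n with
  | zero => rfl
  | succ n ih =>
    simp only [iterA, ← ih, entryDup_sub, mcast_sub, Matrix.mul_sub, Matrix.sub_mul]

lemma frobSq_eq_trace {m : ℕ} (A : Matrix (Fin m) (Fin m) ℂ) :
    frobSq A = (Matrix.trace (Aᴴ * A)).re := by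
  simp only [frobSq, Matrix.trace, Matrix.diag_apply, Matrix.mul_apply,
    Matrix.conjTranspose_apply, Complex.re_sum]
  rw [Finset.sum_comm]
  refine Finset.sum_congr rfl fun i _ => Finset.sum_congr rfl fun j _ => ?_
  rw [Complex.sq_norm]
  simp [Complex.normSq_apply, Complex.mul_re]

lemma mcast_mul {m n : ℕ} (h : m = n) (A B : Matrix (Fin m) (Fin m) ℂ) :
    mcast h A * mcast h B = mcast h (A * B) := by
  subst h
  ext i j
  simp [mcast, Matrix.mul_apply]

lemma mcast_conjTranspose {m n : ℕ} (h : m = n) (A : Matrix (Fin m) (Fin m) ℂ) :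
    (mcast h A)ᴴ = mcast h Aᴴ := by
  ext i j; simp [mcast]

lemma mcast_one {m n : ℕ} (h : m = n) : mcast h (1 : Matrix (Fin m) (Fin m) ℂ) = 1 := by
  subst h
  ext i j
  simp [mcast, Matrix.one_apply]

lemma blockDup_mul {m : ℕ} (A B : Matrix (Fin m) (Fin m) ℂ) :
    blockDup A * blockDup B = blockDup (A * B) := by
  simp only [blockDup, Matrix.reindex_apply]
  rw [Matrix.submatrix_mul_equiv, ← Matrix.mul_kronecker_mul, Matrix.one_mul]

lemma kronecker_conjT {l m p q : Type*} (A : Matrix l m ℂ) (B : Matrix p q ℂ) :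
    (A ⊗ₖ B)ᴴ = Aᴴ ⊗ₖ Bᴴ := by
  ext ⟨i, j⟩ ⟨a, b⟩
  simp [Matrix.conjTranspose_apply, Matrix.kroneckerMap_apply]

lemma blockDup_conjTranspose {m : ℕ} (A : Matrix (Fin m) (Fin m) ℂ) :
    (blockDup A)ᴴ = blockDup Aᴴ := by
  simp only [blockDup, Matrix.reindex_apply, Matrix.conjTranspose_submatrix,
    kronecker_conjT, Matrix.conjTranspose_one]

lemma blockDup_one {m : ℕ} : blockDup (1 : Matrix (Fin m) (Fin m) ℂ) = 1 := by
  simp [blockDup, Matrix.one_kronecker_one, Matrix.submatrix_one_equiv]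

lemma W1_unitary : W1ᴴ * W1 = 1 := by
  have hs : ((Real.sqrt 2 : ℝ) : ℂ) * ((Real.sqrt 2 : ℝ) : ℂ) = 2 := by
    norm_cast
    rw [Real.mul_self_sqrt] <;> norm_num
  have h2 : ((Real.sqrt 2 : ℂ))⁻¹ * ((Real.sqrt 2 : ℂ))⁻¹ = 2⁻¹ := by
    rw [← mul_inv, hs]
  ext i j
  fin_cases i <;> fin_cases j <;>
    simp [W1, Matrix.mul_apply, Fin.sum_univ_four, Matrix.one_apply,
      Matrix.vecHead, Matrix.vecTail, Complex.conj_ofReal, map_inv₀, h2] <;> norm_num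

lemma Wmat_unitary : ∀ n : ℕ, (Wmat n)ᴴ * Wmat n = 1
  | 0 => by simp [Wmat]
  | 1 => by
      show (mcast _ W1)ᴴ * mcast _ W1 = 1
      rw [mcast_conjTranspose, mcast_mul, W1_unitary, mcast_one]
  | (n + 2) => by
      show (mcast _ (blockDup (Wmat (n+1))))ᴴ * mcast _ (blockDup (Wmat (n+1))) = 1
      rw [mcast_conjTranspose, mcast_mul, blockDup_conjTranspose, blockDup_mul,
        Wmat_unitary (n+1), blockDup_one, mcast_one]

lemma frobSq_conj {m : ℕ} (W M : Matrix (Fin m) (Fin m) ℂ) (hW : Wᴴ * W = 1) :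
    frobSq (W * M * Wᴴ) = frobSq M := by
  rw [frobSq_eq_trace, frobSq_eq_trace]
  congr 1
  have : (W * M * Wᴴ)ᴴ * (W * M * Wᴴ) = W * (Mᴴ * M) * Wᴴ := by
    simp only [Matrix.conjTranspose_mul, Matrix.conjTranspose_conjTranspose, Matrix.mul_assoc]
    rw [← Matrix.mul_assoc Wᴴ W (M * Wᴴ), hW, Matrix.one_mul]
  rw [this, Matrix.trace_mul_cycle, ← Matrix.mul_assoc, hW, Matrix.one_mul]

lemma frobSq_mcast {m n : ℕ} (h : m = n) (A : Matrix (Fin m) (Fin m) ℂ) :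
    frobSq (mcast h A) = frobSq A := by
  subst h
  simp only [frobSq, mcast, Matrix.reindex_apply, Matrix.submatrix_apply]
  rfl

lemma frobSq_entryDup {m : ℕ} (A : Matrix (Fin m) (Fin m) ℂ) :
    frobSq (entryDup A) = 2 * frobSq A := by
  have key : ∀ (M : Matrix (Fin m × Fin 2) (Fin m × Fin 2) ℂ),
      frobSq (Matrix.reindex finProdFinEquiv finProdFinEquiv M)
        = ∑ p : Fin m × Fin 2, ∑ q : Fin m × Fin 2, ‖M p q‖ ^ 2 := by
    intro M
    unfold frobSq
    refine (Fintype.sum_equiv finProdFinEquiv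
      (fun p : Fin m × Fin 2 => ∑ q : Fin m × Fin 2, ‖M p q‖ ^ 2)
      (fun i => ∑ j, ‖(Matrix.reindex finProdFinEquiv finProdFinEquiv M) i j‖ ^ 2)
      fun p => ?_).symm
    refine (Fintype.sum_equiv finProdFinEquiv
      (fun q : Fin m × Fin 2 => ‖M p q‖ ^ 2)
      (fun j => ‖(Matrix.reindex finProdFinEquiv finProdFinEquiv M)
        (finProdFinEquiv p) j‖ ^ 2)
      fun q => ?_)
    simp
  rw [entryDup, key]
  simp only [Fintype.sum_prod_type]
  simp [Fin.sum_univ_two, Matrix.one_apply, Matrix.kroneckerMap_apply,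
    Finset.sum_add_distrib, frobSq, two_mul]

lemma frobSq_iterA (k : ℕ) (C : Matrix (Fin (2 ^ k)) (Fin (2 ^ k)) ℂ) (n : ℕ) :
    frobSq (iterA k C n) = 2 ^ n * frobSq C := by
  induction n with
  | zero => simp [iterA]
  | succ n ih =>
    show frobSq (Wmat (k + n) * mcast _ (entryDup (iterA k C n)) * (Wmat (k + n))ᴴ) = _
    rw [frobSq_conj _ _ (Wmat_unitary (k + n)), frobSq_mcast, frobSq_entryDup, ih]
    ring

/-- `‖B(n) − A(n)‖₂² = 2^{n−1} ‖B − A‖₂²` for all `k ≥ 1`, `A, B ∈ M_{2^k}(ℂ)` and `n ≥ 1`.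
Here `A(n) = iterA k A (n-1)`. -/
theorem stmt_11 (k : ℕ) (hk : 1 ≤ k) (A B : Matrix (Fin (2 ^ k)) (Fin (2 ^ k)) ℂ)
    (n : ℕ) (hn : 1 ≤ n) :
    frobSq (iterA k B (n - 1) - iterA k A (n - 1)) = 2 ^ (n - 1) * frobSq (B - A) := by
  rw [iterA_sub, frobSq_iterA]
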